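/- The intersection of SL(2, ℝ) with K_c⁺ = { ![![a, b], ![b/c², a]] : a > 0, a² - b²/c² > 0 } equals the set of Lorentz matrices L_c(u) = κ_c(u)·![![1, u], ![u/c², 1]] with u ∈ (-c, c), where κ_c(u) = 1/√(1 - u²/c²). -/

import Mathlib

/-- The Lorentz matrix `L_c(u) = κ_c(u)·![![1,u],![u/c²,1]]`, `κ_c(u) = 1/√(1-u²/c²)`. -/
noncomputable def lorentz (c u : ℝ) : Matrix (Fin 2) (Fin 2) ℝ :=
  (1 / Real.sqrt (1 - u ^ 2 / c ^ 2)) • !![1, u; u / c ^ 2, 1]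

/-- `SL(2,ℝ) ∩ K_c⁺` equals the set of Lorentz matrices `L_c(u)`, `u ∈ (-c, c)`. -/
theorem SL2_inter_Kc_plus (c : ℝ) (hc : 0 < c) :
    {M : Matrix (Fin 2) (Fin 2) ℝ | M.det = 1 ∧
        ∃ a b : ℝ, 0 < a ∧ a ^ 2 - b ^ 2 / c ^ 2 > 0 ∧ M = !![a, b; b / c ^ 2, a]} =
      {M : Matrix (Fin 2) (Fin 2) ℝ | ∃ u ∈ Set.Ioo (-c) c, M = lorentz c u} := by
  have hc2 : (0:ℝ) < c ^ 2 := by positivity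
  have hc2' : (c:ℝ) ^ 2 ≠ 0 := ne_of_gt hc2
  ext M
  simp only [Set.mem_setOf_eq]
  constructor
  · rintro ⟨hdet, a, b, ha, hpos, rfl⟩
    have hdet' : a * a - b * (b / c ^ 2) = 1 := by
      simpa [Matrix.det_fin_two_of] using hdet
    have key : a ^ 2 * c ^ 2 - b ^ 2 = c ^ 2 := by
      have : (a * a - b * (b / c ^ 2)) * c ^ 2 = 1 * c ^ 2 := by rw [hdet']
      field_simp at this; linarith
    have ha' : a ≠ 0 := ne_of_gt ha
    refine ⟨b / a, ?_, ?_⟩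
    · have hsq : (b / a) ^ 2 < c ^ 2 := by
        rw [div_pow, div_lt_iff₀ (by positivity)]
        nlinarith [sq_nonneg a]
      have := abs_lt_of_sq_lt_sq hsq hc.le
      rw [abs_lt] at this
      exact this
    · have h1 : 1 - (b / a) ^ 2 / c ^ 2 = (1 / a) ^ 2 := by
        field_simp
        linear_combination key
      have hκ : (1 / Real.sqrt (1 - (b / a) ^ 2 / c ^ 2)) = a := by
        rw [h1, Real.sqrt_sq (by positivity)]
        field_simp
      unfold lorentz
      rw [hκ]
      ext i j
      fin_cases i <;> fin_cases j <;>
        simp [Matrix.smul_apply] <;> field_simp <;> ring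
  · rintro ⟨u, ⟨hu1, hu2⟩, rfl⟩
    have husq : u ^ 2 < c ^ 2 := by nlinarith
    have h1 : (0:ℝ) < 1 - u ^ 2 / c ^ 2 := by
      rw [sub_pos, div_lt_one hc2]; exact husq
    have hs : 0 < Real.sqrt (1 - u ^ 2 / c ^ 2) := Real.sqrt_pos.mpr h1
    set s := Real.sqrt (1 - u ^ 2 / c ^ 2) with hsdef
    have hs' : s ≠ 0 := ne_of_gt hs
    have hss : s ^ 2 * c ^ 2 = c ^ 2 - u ^ 2 := by
      have : s ^ 2 = 1 - u ^ 2 / c ^ 2 := Real.sq_sqrt h1.le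
      rw [this]; field_simp
    refine ⟨?_, 1 / s, (1 / s) * u, by positivity, ?_, ?_⟩
    · unfold lorentz
      rw [← hsdef, Matrix.det_smul, Matrix.det_fin_two_of]
      simp only [Fintype.card_fin]
      field_simp
      linear_combination -hss
    · have : (1 / s) ^ 2 - ((1 / s) * u) ^ 2 / c ^ 2 = 1 := by
        field_simp
        linear_combination -hss
      linarith [this]
    · unfold lorentz
      rw [← hsdef]
      ext i j
      fin_cases i <;> fin_cases j <;> simp [Matrix.smul_apply] <;> ring
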